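/- Let F : ℝ → ℝ be continuous and bounded, let α_I, α_E, β_E, K_E, γ_M, γ_I, γ_E > 0, ν_E, ν_M ≥ 0, τ_I, τ_M ≥ 0, and suppose M, I, E : ℝ → ℝ are bounded differentiable functions with K_E + E(t) > 0 for all t, satisfying for all t ∈ ℝ: M'(t) = F(e^{-ν_E τ_M} E(t - τ_M)) - γ_M M(t); I'(t) = α_I M(t - τ_I) e^{-ν_M τ_I} - γ_I I(t); E'(t) = α_E I(t) - β_E I(t) E(t)/(K_E + E(t)) - γ_E E(t). Then for every t ∈ ℝ, E'(t) = ( ∫_0^∞ α_I ( ∫_0^∞ F( e^{-ν_E τ_M} E(t - θ - φ - τ_I - τ_M) ) e^{-γ_M φ} dφ ) e^{-ν_M τ_I} e^{-γ_I θ} dθ ) · ( α_E - β_E E(t)/(K_E + E(t)) ) - γ_E E(t). -/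

import Mathlib

open MeasureTheory

/-- Change of variables `s ↦ t - s` for set integrals. -/
lemma conv_sub_left (h : ℝ → ℝ) (t : ℝ) :
    ∫ s in Set.Ioi (0 : ℝ), h (t - s) = ∫ s in Set.Iio t, h s := by
  have hmp := Measure.measurePreserving_sub_left (volume : Measure ℝ) t
  have hme : MeasurableEmbedding (fun s : ℝ => t - s) :=
    (MeasurableEquiv.subLeft t).measurableEmbedding
  have hpre : (fun s : ℝ => t - s) ⁻¹' Set.Iio t = Set.Ioi 0 := by
    ext x; simp [sub_lt_iff_lt_add]
  calc ∫ s in Set.Ioi (0 : ℝ), h (t - s)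
      = ∫ x in (fun s : ℝ => t - s) ⁻¹' Set.Iio t, h (t - x) := by rw [hpre]
    _ = ∫ s in Set.Iio t, h s ∂(Measure.map (fun s : ℝ => t - s) volume) :=
        (hme.setIntegral_map _ _).symm
    _ = ∫ s in Set.Iio t, h s := by rw [hmp.map_eq]

lemma integrableOn_conv (g : ℝ → ℝ) (hg : Continuous g) (C : ℝ) (hC : ∀ s, |g s| ≤ C)
    {γ : ℝ} (hγ : 0 < γ) (t : ℝ) :
    IntegrableOn (fun s => Real.exp (-γ * t) * (Real.exp (γ * s) * g s)) (Set.Iio t) := by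
  have hmp := Measure.measurePreserving_sub_left (volume : Measure ℝ) t
  have hme : MeasurableEmbedding (fun s : ℝ => t - s) :=
    (MeasurableEquiv.subLeft t).measurableEmbedding
  have hpre : (fun s : ℝ => t - s) ⁻¹' Set.Iio t = Set.Ioi 0 := by
    ext x; simp [sub_lt_iff_lt_add]
  have hrp := hmp.restrict_preimage (measurableSet_Iio (a := t))
  rw [hpre] at hrp
  rw [IntegrableOn, ← hrp.integrable_comp_emb hme]
  have hint : IntegrableOn
      (fun s : ℝ => Real.exp (-γ * t) * (Real.exp (γ * (t - s)) * g (t - s)))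
      (Set.Ioi 0) := by
    apply Integrable.mono' ((exp_neg_integrableOn_Ioi 0 hγ).const_mul C)
    · exact ((Real.continuous_exp.comp (by continuity)).mul
        (hg.comp (by continuity))).aestronglyMeasurable.const_mul _
    · filter_upwards with s
      have : Real.exp (-γ * t) * Real.exp (γ * (t - s)) = Real.exp (-γ * s) := by
        rw [← Real.exp_add]; congr 1; ring
      have hb : |Real.exp (-γ * t) * (Real.exp (γ * (t - s)) * g (t - s))|
          = Real.exp (-γ * s) * |g (t - s)| := by
        rw [abs_mul, abs_mul, abs_of_pos (Real.exp_pos _), abs_of_pos (Real.exp_pos _),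
          ← mul_assoc, this]
      rw [Real.norm_eq_abs, hb]
      calc Real.exp (-γ * s) * |g (t - s)| ≤ Real.exp (-γ * s) * C :=
            mul_le_mul_of_nonneg_left (hC _) (Real.exp_pos _).le
        _ = C * Real.exp (-γ * s) := mul_comm _ _
  exact hint

/-- Core representation lemma: a bounded solution of `u' = g - γ u` with `g`
bounded continuous is given by the convolution integral. -/
lemma repr_aux {g u : ℝ → ℝ} (hg : Continuous g) {C : ℝ} (hC : ∀ s, |g s| ≤ C)
    {γ : ℝ} (hγ : 0 < γ) {Cu : ℝ} (hub : ∀ s, |u s| ≤ Cu)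
    (hu : ∀ s, HasDerivAt u (g s - γ * u s) s) (t : ℝ) :
    u t = ∫ s in Set.Ioi (0 : ℝ), g (t - s) * Real.exp (-γ * s) := by
  set v : ℝ → ℝ := fun s => Real.exp (γ * s) * u s with hv
  have hvd : ∀ s, HasDerivAt v (Real.exp (γ * s) * g s) s := by
    intro s
    have h1 : HasDerivAt (fun s : ℝ => Real.exp (γ * s)) (Real.exp (γ * s) * γ) s := by
      simpa using ((hasDerivAt_id s).const_mul γ).exp
    have : HasDerivAt (fun y => Real.exp (γ * y) * u y)
        (Real.exp (γ * s) * γ * u s + Real.exp (γ * s) * (g s - γ * u s)) s := h1.mul (hu s)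
    convert this using 1
    ring
  have hcont : Continuous fun s => Real.exp (γ * s) * g s :=
    (Real.continuous_exp.comp (continuous_const.mul continuous_id)).mul hg
  have key : ∀ n : ℕ, ∫ s in (t - n)..t, Real.exp (γ * s) * g s = v t - v (t - n) := by
    intro n
    apply intervalIntegral.integral_eq_sub_of_hasDerivAt
    · intro x _; exact hvd x
    · exact hcont.intervalIntegrable _ _
  set seq : ℕ → ℝ := fun n =>
    Real.exp (-γ * t) * (∫ s in (t - n)..t, Real.exp (γ * s) * g s)
      + Real.exp (-γ * n) * u (t - n) with hseq
  have hconst : ∀ n, seq n = u t := by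
    intro n
    have e1 : Real.exp (-γ * t) * Real.exp (γ * t) = 1 := by
      rw [← Real.exp_add]; ring_nf; exact Real.exp_zero
    have e2 : Real.exp (-γ * t) * Real.exp (γ * (t - n)) = Real.exp (-γ * n) := by
      rw [← Real.exp_add]; congr 1; ring
    simp only [hseq, key n, hv]
    linear_combination u t * e1 - u (t - (n : ℝ)) * e2
  -- integrability
  have hI : IntegrableOn (fun s => Real.exp (-γ * t) * (Real.exp (γ * s) * g s))
      (Set.Iio t) := integrableOn_conv g hg C hC hγ t
  have hI' : IntegrableOn (fun s => Real.exp (γ * s) * g s) (Set.Iio t) := by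
    have h2 : IntegrableOn (fun s =>
        Real.exp (γ * t) * (Real.exp (-γ * t) * (Real.exp (γ * s) * g s))) (Set.Iio t) :=
      hI.const_mul (Real.exp (γ * t))
    apply IntegrableOn.congr_fun h2 ?_ measurableSet_Iio
    intro s _
    have : Real.exp (γ * t) * Real.exp (-γ * t) = 1 := by
      rw [← Real.exp_add]; ring_nf; exact Real.exp_zero
    calc Real.exp (γ * t) * (Real.exp (-γ * t) * (Real.exp (γ * s) * g s))
        = (Real.exp (γ * t) * Real.exp (-γ * t)) * (Real.exp (γ * s) * g s) := by ring
      _ = Real.exp (γ * s) * g s := by rw [this, one_mul]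
  -- limit of the first term
  have hmono : Monotone fun n : ℕ => Set.Ioo (t - n) t := by
    intro n m hnm
    apply Set.Ioo_subset_Ioo_left
    have : (n : ℝ) ≤ m := Nat.cast_le.mpr hnm
    linarith
  have hunion : (⋃ n : ℕ, Set.Ioo (t - n) t) = Set.Iio t := by
    ext x
    simp only [Set.mem_iUnion, Set.mem_Ioo, Set.mem_Iio]
    constructor
    · rintro ⟨n, _, h2⟩
      exact h2
    · intro hx
      obtain ⟨n, hn⟩ := exists_nat_gt (t - x)
      exact ⟨n, by linarith, hx⟩
  have htend1 : Filter.Tendsto (fun n : ℕ => ∫ s in Set.Ioo (t - n) t, Real.exp (γ * s) * g s)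
      Filter.atTop (nhds (∫ s in Set.Iio t, Real.exp (γ * s) * g s)) := by
    have := tendsto_setIntegral_of_monotone (fun n : ℕ => measurableSet_Ioo) hmono
      (hunion ▸ hI')
    rwa [hunion] at this
  -- limit of the second term
  have htend2 : Filter.Tendsto (fun n : ℕ => Real.exp (-γ * n) * u (t - n))
      Filter.atTop (nhds 0) := by
    apply squeeze_zero_norm (a := fun n : ℕ => Real.exp (-γ) ^ n * Cu)
    · intro n
      rw [Real.norm_eq_abs, abs_mul, abs_of_pos (Real.exp_pos _)]
      have : Real.exp (-γ * n) = Real.exp (-γ) ^ n := by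
        rw [← Real.exp_nat_mul]; congr 1; ring
      rw [this]
      exact mul_le_mul_of_nonneg_left (hub _) (pow_nonneg (Real.exp_pos _).le _)
    · have : Filter.Tendsto (fun n : ℕ => Real.exp (-γ) ^ n) Filter.atTop (nhds 0) :=
        tendsto_pow_atTop_nhds_zero_of_lt_one (Real.exp_pos _).le
          (Real.exp_lt_one_iff.mpr (by linarith))
      simpa using this.mul_const Cu
  -- combine
  have htend : Filter.Tendsto seq Filter.atTop
      (nhds (Real.exp (-γ * t) * (∫ s in Set.Iio t, Real.exp (γ * s) * g s) + 0)) := by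
    apply Filter.Tendsto.add _ htend2
    have hrw : ∀ n : ℕ, ∫ s in (t - n)..t, Real.exp (γ * s) * g s
        = ∫ s in Set.Ioo (t - n) t, Real.exp (γ * s) * g s := by
      intro n
      rw [intervalIntegral.integral_of_le (by linarith [(Nat.cast_nonneg n : (0:ℝ) ≤ n)] : t - (n:ℝ) ≤ t),
        integral_Ioc_eq_integral_Ioo]
    simp only [hrw]
    exact htend1.const_mul _
  have hconst' : Filter.Tendsto seq Filter.atTop (nhds (u t)) :=
    Filter.Tendsto.congr (fun n => (hconst n).symm) tendsto_const_nhds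
  have hval : u t = Real.exp (-γ * t) * (∫ s in Set.Iio t, Real.exp (γ * s) * g s) + 0 :=
    tendsto_nhds_unique hconst' htend
  -- change of variables on the RHS
  have hcov : ∫ s in Set.Ioi (0 : ℝ), g (t - s) * Real.exp (-γ * s)
      = ∫ s in Set.Iio t, Real.exp (-γ * t) * (Real.exp (γ * s) * g s) := by
    rw [← conv_sub_left (fun x => Real.exp (-γ * t) * (Real.exp (γ * x) * g x)) t]
    apply setIntegral_congr_fun measurableSet_Ioi
    intro s _
    have : Real.exp (-γ * t) * Real.exp (γ * (t - s)) = Real.exp (-γ * s) := by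
      rw [← Real.exp_add]; congr 1; ring
    calc g (t - s) * Real.exp (-γ * s)
        = (Real.exp (-γ * t) * Real.exp (γ * (t - s))) * g (t - s) := by rw [this]; ring
      _ = Real.exp (-γ * t) * (Real.exp (γ * (t - s)) * g (t - s)) := by ring
  rw [hcov, integral_const_mul]
  linarith [hval]

/-- The Yildirim et al. delayed lac-operon model: bounded solutions of the
three discrete-delay equations for mRNA `M`, intermediate protein `I` and
effector `E` reduce to a single scalar distributed DDE for `E`. -/
theorem stmt13
    (F : ℝ → ℝ) (hF : Continuous F) (hFb : ∃ C, ∀ y, |F y| ≤ C)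
    (αI αE βE KE γM γI γE νE νM τI τM : ℝ)
    (hαI : 0 < αI) (hαE : 0 < αE) (hβE : 0 < βE) (hKE : 0 < KE)
    (hγM : 0 < γM) (hγI : 0 < γI) (hγE : 0 < γE)
    (hνE : 0 ≤ νE) (hνM : 0 ≤ νM) (hτI : 0 ≤ τI) (hτM : 0 ≤ τM)
    (M I E : ℝ → ℝ)
    (hMb : ∃ C, ∀ t, |M t| ≤ C) (hIb : ∃ C, ∀ t, |I t| ≤ C)
    (hEb : ∃ C, ∀ t, |E t| ≤ C)
    (hEpos : ∀ t, 0 < KE + E t)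
    (hM : ∀ t : ℝ, HasDerivAt M
      (F (Real.exp (-νE * τM) * E (t - τM)) - γM * M t) t)
    (hI : ∀ t : ℝ, HasDerivAt I
      (αI * M (t - τI) * Real.exp (-νM * τI) - γI * I t) t)
    (hE : ∀ t : ℝ, HasDerivAt E
      (αE * I t - βE * I t * E t / (KE + E t) - γE * E t) t) :
    ∀ t : ℝ, HasDerivAt E
      ((∫ θ in Set.Ioi (0 : ℝ),
          αI * (∫ φ in Set.Ioi (0 : ℝ),
              F (Real.exp (-νE * τM) * E (t - θ - φ - τI - τM))
                * Real.exp (-γM * φ))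
            * Real.exp (-νM * τI) * Real.exp (-γI * θ))
          * (αE - βE * E t / (KE + E t))
        - γE * E t) t := by
  intro t
  obtain ⟨CF, hCF⟩ := hFb
  obtain ⟨CM, hCM⟩ := hMb
  obtain ⟨CI, hCI⟩ := hIb
  have hEdiff : Differentiable ℝ E := fun s => (hE s).differentiableAt
  have hEcont : Continuous E := hEdiff.continuous
  have hMdiff : Differentiable ℝ M := fun s => (hM s).differentiableAt
  have hMcont : Continuous M := hMdiff.continuous
  -- representation of M
  have hgMc : Continuous (fun s => F (Real.exp (-νE * τM) * E (s - τM))) :=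
    hF.comp (continuous_const.mul (hEcont.comp (continuous_id.sub continuous_const)))
  have hMrep : ∀ s : ℝ, M s = ∫ φ in Set.Ioi (0 : ℝ),
      F (Real.exp (-νE * τM) * E (s - φ - τM)) * Real.exp (-γM * φ) :=
    repr_aux (g := fun s => F (Real.exp (-νE * τM) * E (s - τM))) hgMc
      (fun s => hCF _) hγM hCM hM
  -- representation of I
  have hgIc : Continuous (fun s => αI * M (s - τI) * Real.exp (-νM * τI)) :=
    ((continuous_const.mul (hMcont.comp (continuous_id.sub continuous_const))).mul
      continuous_const)
  have hCgI : ∀ s : ℝ, |αI * M (s - τI) * Real.exp (-νM * τI)|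
      ≤ αI * CM * Real.exp (-νM * τI) := by
    intro s
    rw [abs_mul, abs_mul, abs_of_pos hαI, abs_of_pos (Real.exp_pos _)]
    have : αI * |M (s - τI)| ≤ αI * CM :=
      mul_le_mul_of_nonneg_left (hCM _) hαI.le
    exact mul_le_mul_of_nonneg_right this (Real.exp_pos _).le
  have hIrep : ∀ s : ℝ, I s = ∫ θ in Set.Ioi (0 : ℝ),
      αI * M (s - θ - τI) * Real.exp (-νM * τI) * Real.exp (-γI * θ) :=
    repr_aux (g := fun s => αI * M (s - τI) * Real.exp (-νM * τI)) hgIc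
      hCgI hγI hCI hI
  -- the inner integral equals M
  have hinner : ∀ θ : ℝ, (∫ φ in Set.Ioi (0 : ℝ),
      F (Real.exp (-νE * τM) * E (t - θ - φ - τI - τM)) * Real.exp (-γM * φ))
      = M (t - θ - τI) := by
    intro θ
    rw [hMrep (t - θ - τI)]
    apply setIntegral_congr_fun measurableSet_Ioi
    intro φ _
    have h : t - θ - φ - τI - τM = t - θ - τI - φ - τM := by ring
    beta_reduce
    rw [h]
  -- the big double integral equals I t
  have hJ : (∫ θ in Set.Ioi (0 : ℝ),
      αI * (∫ φ in Set.Ioi (0 : ℝ),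
          F (Real.exp (-νE * τM) * E (t - θ - φ - τI - τM)) * Real.exp (-γM * φ))
        * Real.exp (-νM * τI) * Real.exp (-γI * θ)) = I t := by
    rw [hIrep t]
    apply setIntegral_congr_fun measurableSet_Ioi
    intro θ _
    beta_reduce
    rw [hinner θ]
  have := hE t
  convert this using 1
  rw [hJ]
  ring
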